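/- Suppose the pair (valid, execute) satisfies persistent validity and persistent execution. Let S : List Op and let K : List Op be a list of operations whose issuers are pairwise distinct and such that valid S op holds for every op in K. Then for every index r < K.length, valid (S ++ K.take r) (K.get r) holds and execute (S ++ K.take r) (K.get r) = execute S (K.get r). (This is the paper's lemma that a run with state S can be extended with all the concurrent valid operations of K, in any order, each remaining valid and returning the value it would return against S.) -/

import Mathlib

/-- If `(valid, execute)` satisfies persistent validity and persistent execution,
then a state `S` can be extended with a batch `K` of valid operations with
pairwise-distinct issuers, in any order: each operation of `K` remains valid at
its position and returns the value it would return against `S`. -/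
theorem persistent_execution_batch_extension {Op I V : Type}
    (issuer : Op → I) (valid : List Op → Op → Prop) (execute : List Op → Op → V)
    (hPV : ∀ (S : List Op) (op op' : Op), issuer op ≠ issuer op' →
      valid S op → valid S op' → valid (S ++ [op']) op)
    (hPE : ∀ (S : List Op) (op op' : Op), issuer op ≠ issuer op' →
      valid S op → valid S op' → execute (S ++ [op']) op = execute S op)
    (S K : List Op)
    (hdistinct : K.Pairwise fun a b => issuer a ≠ issuer b)
    (hvalid : ∀ op ∈ K, valid S op) :
    ∀ (r : ℕ) (hr : r < K.length),
      valid (S ++ K.take r) (K.get ⟨r, hr⟩) ∧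
      execute (S ++ K.take r) (K.get ⟨r, hr⟩) = execute S (K.get ⟨r, hr⟩) := by
  rw [List.pairwise_iff_get] at hdistinct
  -- helper: membership in take gives an index
  have memtake : ∀ (r : ℕ) (x : Op), x ∈ K.take r →
      ∃ (i : ℕ) (hi : i < K.length), i < r ∧ K.get ⟨i, hi⟩ = x := by
    intro r x hx
    obtain ⟨i, hi, hxe⟩ := List.mem_iff_getElem.mp hx
    have hi2 := hi
    simp [List.length_take] at hi2
    refine ⟨i, hi2.2, hi2.1, ?_⟩
    rw [← hxe]
    simp [List.getElem_take]
  have key : ∀ r, r ≤ K.length → ∀ op, valid S op →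
      (∀ x ∈ K.take r, issuer op ≠ issuer x) →
      valid (S ++ K.take r) op ∧
        execute (S ++ K.take r) op = execute S op := by
    intro r
    induction r with
    | zero => intro _ op hv _; simp only [List.take_zero, List.append_nil]; exact ⟨hv, trivial⟩
    | succ r ih =>
      intro hr op hv hne
      have hrlt : r < K.length := hr
      have htake : K.take (r + 1) = K.take r ++ [K.get ⟨r, hrlt⟩] := by
        rw [List.take_succ]
        simp [List.getElem?_eq_getElem hrlt]
      have hmemr : K.get ⟨r, hrlt⟩ ∈ K.take (r + 1) := by
        rw [htake]; exact List.mem_append_right _ (List.mem_singleton_self _)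
    -- issuer of op distinct from earlier ones
      have hne' : ∀ x ∈ K.take r, issuer op ≠ issuer x := fun x hx =>
        hne x (by rw [htake]; exact List.mem_append_left _ hx)
      have hgetne : ∀ x ∈ K.take r, issuer (K.get ⟨r, hrlt⟩) ≠ issuer x := by
        intro x hx
        obtain ⟨i, hi, hilt, rfl⟩ := memtake r x hx
        exact (hdistinct ⟨i, hi⟩ ⟨r, hrlt⟩ hilt).symm
      have hop := ih (le_of_lt hrlt) op hv hne'
      have hget := ih (le_of_lt hrlt) (K.get ⟨r, hrlt⟩)
        (hvalid _ (K.get_mem _)) hgetne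
      have hneop : issuer op ≠ issuer (K.get ⟨r, hrlt⟩) := hne _ hmemr
      constructor
      · rw [htake, ← List.append_assoc]
        exact hPV _ _ _ hneop hop.1 hget.1
      · rw [htake, ← List.append_assoc,
          hPE _ _ _ hneop hop.1 hget.1, hop.2]
  intro r hr
  apply key r (le_of_lt hr) _ (hvalid _ (K.get_mem _))
  intro x hx
  obtain ⟨i, hi, hilt, rfl⟩ := memtake r x hx
  exact (hdistinct ⟨i, hi⟩ ⟨r, hr⟩ hilt).symm
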